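/- Let $B$ be an algebra over a field $k$, $C$ a finite-dimensional coalgebra, and suppose $A$ is an $H$-module algebra with $C$ a finite-dimensional subcoalgebra of the Hopf algebra $H$. Let $\theta: A \to [C^{\mathrm{cop}}, A]$ be the algebra homomorphism $\theta_a(c) = S(c)a$. Then the convolution algebra $[C^{\mathrm{cop}}, A]$ equals $\theta(A)\, C^*$, where $C^* \subseteq \operatorname{Hom}_k(C, A)$ is the space of scalar-valued functionals; in particular $[C^{\mathrm{cop}}, A]$ is a finitely generated left $\theta(A)$-module. -/

import Mathlib

open TensorProduct

/-- The `k`-linear map `h ↦ h • a` associated to a linear action of `H` on `A`. -/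
def actL (k H A : Type*) [CommSemiring k] [Semiring H] [Module k H]
    [AddCommMonoid A] [Module k A] [Module H A] [IsScalarTower k H A] (a : A) :
    H →ₗ[k] A where
  toFun h := h • a
  map_add' h h' := add_smul h h' a
  map_smul' c h := by simp [smul_assoc]

/-- The algebra homomorphism `θ : A → [C^cop, A]`, `θ_a(c) = S(c) • a`. -/
noncomputable def thetaMap {k H A : Type*} [Field k] [Ring H] [HopfAlgebra k H]
    [Ring A] [Algebra k A] [Module H A] [IsScalarTower k H A]
    (C : Submodule k H) (a : A) : C →ₗ[k] A :=
  actL k H A a ∘ₗ HopfAlgebra.antipode (R := k) ∘ₗ C.subtype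

/-- Convolution on `Hom_k(C, A)` with respect to the opposite comultiplication of the
subcoalgebra `C`: `(ξ × η)(c) = ∑ ξ(c₂) η(c₁)`. -/
noncomputable def convCop {k A : Type*} [Field k] [Ring A] [Algebra k A]
    {C : Type*} [AddCommGroup C] [Module k C]
    (comulC : C →ₗ[k] C ⊗[k] C) (ξ η : C →ₗ[k] A) : C →ₗ[k] A :=
  LinearMap.mul' k A ∘ₗ TensorProduct.map ξ η ∘ₗ
    (TensorProduct.comm k C C).toLinearMap ∘ₗ comulC

/-- The embedding of scalar-valued functionals `C* ⊆ Hom_k(C, A)`. -/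
noncomputable def embDual {k A : Type*} [Field k] [Ring A] [Algebra k A]
    {C : Type*} [AddCommGroup C] [Module k C] (ξ : C →ₗ[k] k) : C →ₗ[k] A :=
  (Algebra.linearMap k A) ∘ₗ ξ

section Helpers

open Coalgebra HopfAlgebra


section AntipodeHelpers

variable {R H : Type*} [CommRing R] [Ring H] [HopfAlgebra R H]

local notation "𝒮" => HopfAlgebra.antipode (R := R) (A := H)

lemma my_antipode_one : 𝒮 (1 : H) = 1 := by
  have := mul_antipode_rTensor_comul_apply (R := R) (a := (1:H))
  simpa [Bialgebra.comul_one, Algebra.TensorProduct.one_def] using this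

lemma sum_counit_smul_left {a : H} {ι : Type*} (r : Coalgebra.Repr R a ι) :
    ∑ i ∈ r.index, counit (R := R) (r.right i) • r.left i = a := by
  have h := Coalgebra.sum_tmul_counit_eq (R := R) r
  have h2 := congrArg (TensorProduct.rid R H) h
  rw [map_sum] at h2
  simp only [TensorProduct.rid_tmul, TensorProduct.rid_symm_apply] at h2
  simpa using h2

lemma sum_counit_smul_right {a : H} {ι : Type*} (r : Coalgebra.Repr R a ι) :
    ∑ i ∈ r.index, counit (R := R) (r.left i) • r.right i = a := by
  have h := Coalgebra.sum_counit_tmul_eq (R := R) r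
  have h2 := congrArg (TensorProduct.lid R H) h
  rw [map_sum] at h2
  simp only [TensorProduct.lid_tmul] at h2
  simpa using h2

/-- A representation of `comul (a*b)` built from representations of `comul a`, `comul b`. -/
def mulRepr {a b : H} {ι κ : Type*} (ra : Coalgebra.Repr R a ι) (rb : Coalgebra.Repr R b κ) :
    Coalgebra.Repr R (a * b) (ι × κ) where
  index := ra.index ×ˢ rb.index
  left p := ra.left p.1 * rb.left p.2
  right p := ra.right p.1 * rb.right p.2
  eq := by
    rw [Finset.sum_product]
    rw [Bialgebra.comul_mul, ← ra.eq, ← rb.eq, Finset.sum_mul_sum]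
    simp [Algebra.TensorProduct.tmul_mul_tmul]

end AntipodeHelpers


set_option maxHeartbeats 1000000 in
theorem sum4_swap {ια ιβ M : Type*} [AddCommMonoid M] {κα : ια → Type*} {κβ : ιβ → Type*}
    (sa : Finset ια) (ta : ∀ i, Finset (κα i)) (sb : Finset ιβ) (tb : ∀ j, Finset (κβ j))
    (f : ∀ i, κα i → ∀ j, κβ j → M) :
    ∑ i ∈ sa, ∑ k ∈ ta i, ∑ j ∈ sb, ∑ l ∈ tb j, f i k j l =
    ∑ j ∈ sb, ∑ l ∈ tb j, ∑ i ∈ sa, ∑ k ∈ ta i, f i k j l := by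
  calc ∑ i ∈ sa, ∑ k ∈ ta i, ∑ j ∈ sb, ∑ l ∈ tb j, f i k j l
      = ∑ i ∈ sa, ∑ k ∈ ta i, ∑ q ∈ sb.sigma tb, f i k q.1 q.2 :=
        Finset.sum_congr rfl fun i _ => Finset.sum_congr rfl fun k _ =>
          Finset.sum_sigma' sb tb (fun j l => f i k j l)
    _ = ∑ p ∈ sa.sigma ta, ∑ q ∈ sb.sigma tb, f p.1 p.2 q.1 q.2 :=
        Finset.sum_sigma' sa ta (fun i k => ∑ q ∈ sb.sigma tb, f i k q.1 q.2)
    _ = ∑ q ∈ sb.sigma tb, ∑ p ∈ sa.sigma ta, f p.1 p.2 q.1 q.2 := Finset.sum_comm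
    _ = ∑ q ∈ sb.sigma tb, ∑ i ∈ sa, ∑ k ∈ ta i, f i k q.1 q.2 :=
        Finset.sum_congr rfl fun q _ =>
          (Finset.sum_sigma' sa ta (fun i k => f i k q.1 q.2)).symm
    _ = ∑ j ∈ sb, ∑ l ∈ tb j, ∑ i ∈ sa, ∑ k ∈ ta i, f i k j l :=
        (Finset.sum_sigma' sb tb (fun j l => ∑ i ∈ sa, ∑ k ∈ ta i, f i k j l)).symm

section AntipodeMul

variable {R H : Type*} [CommRing R] [Ring H] [HopfAlgebra R H]

local notation "𝒮" => HopfAlgebra.antipode (R := R) (A := H)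

/-- The 6-linear "zip" map used to apply coassociativity on both factors at once:
`(x ⊗ (y ⊗ z)) ⊗ (p ⊗ (q ⊗ r)) ↦ S(x*p) * (y * (q * (S r * S z)))`. -/
noncomputable def zipMap : ((H ⊗[R] (H ⊗[R] H)) ⊗[R] (H ⊗[R] (H ⊗[R] H))) →ₗ[R] H :=
  LinearMap.mul' R H ∘ₗ
  TensorProduct.map (𝒮 ∘ₗ LinearMap.mul' R H)
    ((LinearMap.mul' R H ∘ₗ TensorProduct.map LinearMap.id
        (LinearMap.mul' R H ∘ₗ TensorProduct.map LinearMap.id (LinearMap.mul' R H))) ∘ₗ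
      (TensorProduct.assoc R H H (H ⊗[R] H)).toLinearMap ∘ₗ
      (TensorProduct.map LinearMap.id (TensorProduct.comm R H H).toLinearMap) ∘ₗ
      (TensorProduct.tensorTensorTensorComm R H H H H).toLinearMap) ∘ₗ
  (TensorProduct.tensorTensorTensorComm R H (H ⊗[R] H) H (H ⊗[R] H)).toLinearMap ∘ₗ
  TensorProduct.map (TensorProduct.map LinearMap.id (TensorProduct.map LinearMap.id 𝒮))
    (TensorProduct.map LinearMap.id (TensorProduct.map LinearMap.id 𝒮))

@[simp] lemma zipMap_tmul (x y z p q r : H) :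
    zipMap ((x ⊗ₜ[R] (y ⊗ₜ[R] z)) ⊗ₜ[R] (p ⊗ₜ[R] (q ⊗ₜ[R] r))) =
      𝒮 (x * p) * (y * (q * (𝒮 r * 𝒮 z))) := by
  simp [zipMap, TensorProduct.tensorTensorTensorComm_tmul]

end AntipodeMul
section AntipodeMul2
variable {R H : Type*} [CommRing R] [Ring H] [HopfAlgebra R H]
local notation "𝒮" => HopfAlgebra.antipode (R := R) (A := H)

theorem my_antipode_mul (a b : H) : 𝒮 (a * b) = 𝒮 b * 𝒮 a := by
  let ra := Coalgebra.Repr.arbitrary R a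
  let rb := Coalgebra.Repr.arbitrary R b
  let raL : ∀ i : H × H, Coalgebra.Repr R (ra.left i) (H × H) := fun i => Coalgebra.Repr.arbitrary R _
  let raR : ∀ i : H × H, Coalgebra.Repr R (ra.right i) (H × H) := fun i => Coalgebra.Repr.arbitrary R _
  -- step 1
  have h1 : 𝒮 (a * b) = ∑ i ∈ ra.index, ∑ j ∈ rb.index,
      (counit (R := R) (ra.right i) * counit (R := R) (rb.right j)) • 𝒮 (ra.left i * rb.left j) := by
    conv_lhs => rw [← sum_counit_smul_left ra, ← sum_counit_smul_left rb]
    rw [Finset.sum_mul_sum]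
    simp only [smul_mul_assoc, mul_smul_comm, map_sum, map_smul, smul_smul]
    exact Finset.sum_congr rfl fun i _ => Finset.sum_congr rfl fun j _ => by rw [mul_comm]
  let rbL : ∀ j : H × H, Coalgebra.Repr R (rb.left j) (H × H) := fun j => Coalgebra.Repr.arbitrary R _
  let rbR : ∀ j : H × H, Coalgebra.Repr R (rb.right j) (H × H) := fun j => Coalgebra.Repr.arbitrary R _
  -- step 2
  have h2 : ∀ i j, (counit (R := R) (ra.right i) * counit (R := R) (rb.right j)) •
        𝒮 (ra.left i * rb.left j) =
      ∑ k ∈ (raR i).index, ∑ l ∈ (rbR j).index,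
        𝒮 (ra.left i * rb.left j) *
          ((raR i).left k * ((rbR j).left l * (𝒮 ((rbR j).right l) * 𝒮 ((raR i).right k)))) := by
    intro i j
    have inner : ∀ k, ∑ l ∈ (rbR j).index,
        (rbR j).left l * (𝒮 ((rbR j).right l) * 𝒮 ((raR i).right k)) =
        counit (R := R) (rb.right j) • 𝒮 ((raR i).right k) := by
      intro k
      calc ∑ l ∈ (rbR j).index, (rbR j).left l * (𝒮 ((rbR j).right l) * 𝒮 ((raR i).right k))
          = (∑ l ∈ (rbR j).index, (rbR j).left l * 𝒮 ((rbR j).right l)) * 𝒮 ((raR i).right k) := by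
            rw [Finset.sum_mul]; simp only [mul_assoc]
        _ = _ := by rw [sum_mul_antipode_eq_smul (rbR j), smul_mul_assoc, one_mul]
    refine (calc
      ∑ k ∈ (raR i).index, ∑ l ∈ (rbR j).index,
          𝒮 (ra.left i * rb.left j) *
            ((raR i).left k * ((rbR j).left l * (𝒮 ((rbR j).right l) * 𝒮 ((raR i).right k))))
        = ∑ k ∈ (raR i).index, 𝒮 (ra.left i * rb.left j) *
            ((raR i).left k * (counit (R := R) (rb.right j) • 𝒮 ((raR i).right k))) := by
          refine Finset.sum_congr rfl fun k _ => ?_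
          rw [← Finset.mul_sum, ← Finset.mul_sum, inner k]
      _ = counit (R := R) (rb.right j) • (𝒮 (ra.left i * rb.left j) *
            ∑ k ∈ (raR i).index, (raR i).left k * 𝒮 ((raR i).right k)) := by
          simp only [mul_smul_comm, ← Finset.smul_sum, ← Finset.mul_sum]
      _ = counit (R := R) (rb.right j) • (𝒮 (ra.left i * rb.left j) *
            (counit (R := R) (ra.right i) • (1:H))) := by
          rw [sum_mul_antipode_eq_smul (raR i)]
      _ = (counit (R := R) (ra.right i) * counit (R := R) (rb.right j)) •
            𝒮 (ra.left i * rb.left j) := by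
          rw [mul_smul_comm, mul_one, smul_smul, mul_comm]).symm
  -- combine steps 1 and 2, and swap the j and k sums
  have T1 : 𝒮 (a * b) = ∑ i ∈ ra.index, ∑ k ∈ (raR i).index, ∑ j ∈ rb.index, ∑ l ∈ (rbR j).index,
      𝒮 (ra.left i * rb.left j) *
        ((raR i).left k * ((rbR j).left l * (𝒮 ((rbR j).right l) * 𝒮 ((raR i).right k)))) := by
    rw [h1]
    refine Finset.sum_congr rfl fun i _ => ?_
    rw [Finset.sum_comm]
    exact Finset.sum_congr rfl fun j _ => h2 i j
  -- apply coassociativity on both factors at once, via `zipMap`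
  have CAa := Coalgebra.sum_tmul_tmul_eq (R := R) ra raL raR
  have CAb := Coalgebra.sum_tmul_tmul_eq (R := R) rb rbL rbR
  have e1 : (∑ i ∈ ra.index, ∑ k ∈ (raL i).index,
        (raL i).left k ⊗ₜ[R] ((raL i).right k ⊗ₜ[R] ra.right i)) ⊗ₜ[R]
      (∑ j ∈ rb.index, ∑ l ∈ (rbL j).index,
        (rbL j).left l ⊗ₜ[R] ((rbL j).right l ⊗ₜ[R] rb.right j)) =
      (∑ i ∈ ra.index, ∑ k ∈ (raR i).index,
        ra.left i ⊗ₜ[R] ((raR i).left k ⊗ₜ[R] (raR i).right k)) ⊗ₜ[R]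
      (∑ j ∈ rb.index, ∑ l ∈ (rbR j).index,
        rb.left j ⊗ₜ[R] ((rbR j).left l ⊗ₜ[R] (rbR j).right l)) := by
    rw [CAa, CAb]
  have e2 := congrArg (zipMap (R := R) (H := H)) e1
  simp only [TensorProduct.sum_tmul, TensorProduct.tmul_sum, map_sum, zipMap_tmul] at e2
  have T3 : 𝒮 (a * b) = ∑ i ∈ ra.index, ∑ j ∈ rb.index, ∑ k ∈ (raL i).index, ∑ l ∈ (rbL j).index,
      𝒮 ((raL i).left k * (rbL j).left l) *
        ((raL i).right k * ((rbL j).right l * (𝒮 (rb.right j) * 𝒮 (ra.right i)))) := by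
    rw [T1, sum4_swap, ← e2, sum4_swap]
    refine Finset.sum_congr rfl fun i _ => Finset.sum_comm
  -- contract the inner double sums using the antipode axiom for products
  have contr : ∀ i j, (∑ k ∈ (raL i).index, ∑ l ∈ (rbL j).index,
      𝒮 ((raL i).left k * (rbL j).left l) *
        ((raL i).right k * ((rbL j).right l * (𝒮 (rb.right j) * 𝒮 (ra.right i))))) =
      (counit (R := R) (ra.left i) * counit (R := R) (rb.left j)) •
        (𝒮 (rb.right j) * 𝒮 (ra.right i)) := by
    intro i j
    have hp := sum_antipode_mul_eq_smul (R := R) (mulRepr (raL i) (rbL j))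
    calc ∑ k ∈ (raL i).index, ∑ l ∈ (rbL j).index,
          𝒮 ((raL i).left k * (rbL j).left l) *
            ((raL i).right k * ((rbL j).right l * (𝒮 (rb.right j) * 𝒮 (ra.right i))))
        = (∑ p ∈ (raL i).index ×ˢ (rbL j).index,
            𝒮 ((raL i).left p.1 * (rbL j).left p.2) * ((raL i).right p.1 * (rbL j).right p.2)) *
            (𝒮 (rb.right j) * 𝒮 (ra.right i)) := by
          rw [Finset.sum_product, Finset.sum_mul]
          refine Finset.sum_congr rfl fun k _ => ?_
          rw [Finset.sum_mul]
          refine Finset.sum_congr rfl fun l _ => by rw [mul_assoc, mul_assoc]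
      _ = (counit (R := R) (ra.left i * rb.left j) • (1:H)) *
            (𝒮 (rb.right j) * 𝒮 (ra.right i)) := by rw [← hp]; rfl
      _ = _ := by
          rw [smul_mul_assoc, one_mul, Bialgebra.counit_mul]
  have T4 : 𝒮 (a * b) = ∑ i ∈ ra.index, ∑ j ∈ rb.index,
      (counit (R := R) (ra.left i) * counit (R := R) (rb.left j)) •
        (𝒮 (rb.right j) * 𝒮 (ra.right i)) := by
    rw [T3]
    exact Finset.sum_congr rfl fun i _ => Finset.sum_congr rfl fun j _ => contr i j
  -- endgame
  have ha : 𝒮 a = ∑ i ∈ ra.index, counit (R := R) (ra.left i) • 𝒮 (ra.right i) := by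
    conv_lhs => rw [show a = ∑ i ∈ ra.index, counit (R := R) (ra.left i) • ra.right i from
      (sum_counit_smul_right ra).symm]
    rw [map_sum]
    exact Finset.sum_congr rfl fun i _ => by rw [map_smul]
  have hb : 𝒮 b = ∑ j ∈ rb.index, counit (R := R) (rb.left j) • 𝒮 (rb.right j) := by
    conv_lhs => rw [show b = ∑ j ∈ rb.index, counit (R := R) (rb.left j) • rb.right j from
      (sum_counit_smul_right rb).symm]
    rw [map_sum]
    exact Finset.sum_congr rfl fun j _ => by rw [map_smul]
  rw [T4, hb, ha, Finset.sum_mul_sum, Finset.sum_comm]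
  refine Finset.sum_congr rfl fun i _ => Finset.sum_congr rfl fun j _ => ?_
  rw [smul_mul_assoc, mul_smul_comm, smul_smul, mul_comm]

end AntipodeMul2

end Helpers

set_option maxHeartbeats 3200000
set_option synthInstance.maxHeartbeats 800000

/-- For a finite-dimensional subcoalgebra `C` of `H` and an `H`-module algebra `A`, the
convolution algebra `[C^cop, A]` equals `θ(A) C*`; in particular it is a finitely
generated left `θ(A)`-module. -/
theorem convolution_algebra_eq_theta_mul_dual
    {k H A : Type*} [Field k] [Ring H] [HopfAlgebra k H]
    [Ring A] [Algebra k A] [Module H A] [IsScalarTower k H A]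
    (hmul : ∀ (h : H) (a b : A), h • (a * b) =
      LinearMap.mul' k A (TensorProduct.map (actL k H A a) (actL k H A b)
        (Coalgebra.comul (R := k) h)))
    (hone : ∀ h : H, h • (1 : A) = Coalgebra.counit (R := k) h • (1 : A))
    (C : Submodule k H) [FiniteDimensional k C]
    (comulC : C →ₗ[k] C ⊗[k] C)
    (hcomulC : (TensorProduct.map C.subtype C.subtype) ∘ₗ comulC =
      Coalgebra.comul (R := k) ∘ₗ C.subtype) :
    ∀ f : C →ₗ[k] A, ∃ (n : ℕ) (a : Fin n → A) (ξ : Fin n → (C →ₗ[k] k)),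
      f = ∑ i : Fin n, convCop comulC (thetaMap C (a i)) (embDual (ξ i)) := by
  intro f
  classical
  set n := Module.finrank k C with hn
  set b : Module.Basis (Fin n) k C := Module.finBasis k C with hb
  -- expansion of any tensor in `C ⊗ C` along the basis in the first leg
  have expand : ∀ t : C ⊗[k] C, t = ∑ p : Fin n,
      b p ⊗ₜ[k] (TensorProduct.lid k C (LinearMap.rTensor C (b.coord p) t)) := by
    intro t
    induction t using TensorProduct.induction_on with
    | zero => simp
    | tmul x y =>
      conv_lhs => rw [← b.sum_repr x]
      rw [TensorProduct.sum_tmul]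
      refine Finset.sum_congr rfl fun p _ => ?_
      rw [TensorProduct.smul_tmul]
      simp [Module.Basis.coord_apply]
    | add t₁ t₂ ih₁ ih₂ =>
      conv_lhs => rw [ih₁, ih₂]
      rw [← Finset.sum_add_distrib]
      refine Finset.sum_congr rfl fun p _ => ?_
      rw [map_add, map_add, TensorProduct.tmul_add]
  obtain ⟨v, hv⟩ : ∃ v : Fin n → Fin n → C, ∀ q,
      comulC (b q) = ∑ p : Fin n, b p ⊗ₜ[k] v p q :=
    ⟨fun p q => TensorProduct.lid k C (LinearMap.rTensor C (b.coord p) (comulC (b q))),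
      fun q => expand _⟩
  -- the comultiplication of basis vectors inside `H`
  have h1 : ∀ q, Coalgebra.comul (R := k) (C.subtype (b q)) =
      ∑ p : Fin n, C.subtype (b p) ⊗ₜ[k] C.subtype (v p q) := by
    intro q
    have h := DFunLike.congr_fun hcomulC (b q)
    simp only [LinearMap.comp_apply] at h
    rw [← h, hv q, map_sum]
    exact Finset.sum_congr rfl fun p _ => by rw [TensorProduct.map_tmul]
  -- a retraction of the inclusion
  obtain ⟨π, hπ⟩ := C.subtype.exists_leftInverse_of_injective (Submodule.ker_subtype C)
  have hπ' : ∀ x : C, π (C.subtype x) = x := fun x => DFunLike.congr_fun hπ x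
  -- counit of the matrix coefficients
  have h2 : ∀ p q, Coalgebra.counit (R := k) (C.subtype (v p q)) = if p = q then 1 else 0 := by
    intro p q
    have h := Coalgebra.lTensor_counit_comul (R := k) (C.subtype (b q))
    rw [h1 q, map_sum] at h
    simp only [LinearMap.lTensor_tmul] at h
    have h' := congrArg (TensorProduct.rid k H) h
    rw [map_sum] at h'
    simp only [TensorProduct.rid_tmul] at h'
    have h'' := congrArg π h'
    rw [map_sum] at h''
    simp only [map_smul, hπ'] at h''
    have h3 := congrArg (b.coord p) h''
    rw [map_sum] at h3
    simp only [map_smul, Module.Basis.coord_apply, Module.Basis.repr_self, Finsupp.single_apply,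
      smul_eq_mul, mul_ite, mul_one, mul_zero] at h3
    rw [Finset.sum_ite_eq' Finset.univ p] at h3
    simp only [Finset.mem_univ, if_true] at h3
    rw [h3]
    simp [eq_comm]
  -- comultiplication of the matrix coefficients
  have h3 : ∀ r q, Coalgebra.comul (R := k) (C.subtype (v r q)) =
      ∑ p : Fin n, C.subtype (v r p) ⊗ₜ[k] C.subtype (v p q) := by
    intro r q
    have hca := Coalgebra.coassoc_apply (R := k) (C.subtype (b q))
    rw [h1 q] at hca
    simp only [map_sum, LinearMap.rTensor_tmul, LinearMap.lTensor_tmul, h1,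
      TensorProduct.sum_tmul, TensorProduct.assoc_tmul] at hca
    have hca2 := congrArg (LinearMap.rTensor (H ⊗[k] H) ((b.coord r) ∘ₗ π)) hca
    simp only [map_sum, LinearMap.rTensor_tmul, LinearMap.comp_apply, hπ',
      Module.Basis.coord_apply, Module.Basis.repr_self] at hca2
    have hca3 := congrArg (TensorProduct.lid k (H ⊗[k] H)) hca2
    simp only [map_sum, TensorProduct.lid_tmul, Finsupp.single_apply, ite_smul, one_smul,
      zero_smul, Finset.sum_ite_eq', Finset.mem_univ, if_true] at hca3
    exact hca3.symm
  -- the antipode relation for the matrix coefficients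
  have hR1 : ∀ r q, (∑ p : Fin n,
      HopfAlgebra.antipode (R := k) (C.subtype (v r p)) * C.subtype (v p q)) =
      if r = q then (1:H) else 0 := by
    intro r q
    have h := HopfAlgebra.mul_antipode_rTensor_comul_apply (R := k) (a := C.subtype (v r q))
    rw [h3 r q, map_sum, map_sum] at h
    simp only [LinearMap.rTensor_tmul, LinearMap.mul'_apply] at h
    rw [h2 r q] at h
    rw [h]
    split_ifs <;> simp
  -- conclusion
  refine ⟨n, fun p => ∑ s : Fin n,
      (HopfAlgebra.antipode (R := k) (HopfAlgebra.antipode (R := k) (C.subtype (v s p)))) •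
        f (b s), fun p => b.coord p, ?_⟩
  apply b.ext
  intro q
  rw [LinearMap.sum_apply]
  have term : ∀ (p : Fin n) (a : A),
      (convCop comulC (thetaMap C a) (embDual (b.coord p))) (b q) =
      HopfAlgebra.antipode (R := k) (C.subtype (v p q)) • a := by
    intro p a
    simp only [convCop, LinearMap.comp_apply, LinearEquiv.coe_coe]
    rw [hv q]
    simp only [map_sum, TensorProduct.comm_tmul, TensorProduct.map_tmul, LinearMap.mul'_apply,
      thetaMap, embDual, LinearMap.comp_apply, Algebra.linearMap_apply, Module.Basis.coord_apply,
      Module.Basis.repr_self, Finsupp.single_apply, actL, LinearMap.coe_mk, AddHom.coe_mk]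
    have hterm : ∀ r : Fin n,
        (HopfAlgebra.antipode (R := k) (C.subtype (v r q)) • a) *
          (algebraMap k A (if r = p then 1 else 0)) =
        if r = p then HopfAlgebra.antipode (R := k) (C.subtype (v r q)) • a else 0 := by
      intro r; split_ifs <;> simp
    rw [Finset.sum_congr rfl (fun r _ => hterm r), Finset.sum_ite_eq' Finset.univ p]
    simp
  rw [Finset.sum_congr rfl (fun p _ => term p _)]
  have step : ∀ p, (HopfAlgebra.antipode (R := k) (C.subtype (v p q))) •
      (∑ s : Fin n, (HopfAlgebra.antipode (R := k)
        (HopfAlgebra.antipode (R := k) (C.subtype (v s p)))) • f (b s)) =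
      ∑ s : Fin n, (HopfAlgebra.antipode (R := k) (C.subtype (v p q)) *
        HopfAlgebra.antipode (R := k) (HopfAlgebra.antipode (R := k) (C.subtype (v s p)))) •
          f (b s) := by
    intro p
    rw [Finset.smul_sum]
    exact Finset.sum_congr rfl fun s _ => (mul_smul _ _ _).symm
  rw [Finset.sum_congr rfl (fun p _ => step p), Finset.sum_comm]
  have fin : ∀ s, (∑ p : Fin n, (HopfAlgebra.antipode (R := k) (C.subtype (v p q)) *
      HopfAlgebra.antipode (R := k) (HopfAlgebra.antipode (R := k) (C.subtype (v s p)))) •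
        f (b s)) = (if s = q then (1:H) else 0) • f (b s) := by
    intro s
    rw [← Finset.sum_smul]
    congr 1
    calc ∑ p : Fin n, HopfAlgebra.antipode (R := k) (C.subtype (v p q)) *
          HopfAlgebra.antipode (R := k) (HopfAlgebra.antipode (R := k) (C.subtype (v s p)))
        = ∑ p : Fin n, HopfAlgebra.antipode (R := k)
            (HopfAlgebra.antipode (R := k) (C.subtype (v s p)) * C.subtype (v p q)) :=
          Finset.sum_congr rfl fun p _ => (my_antipode_mul _ _).symm
      _ = HopfAlgebra.antipode (R := k) (∑ p : Fin n,
            HopfAlgebra.antipode (R := k) (C.subtype (v s p)) * C.subtype (v p q)) :=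
          (map_sum _ _ _).symm
      _ = HopfAlgebra.antipode (R := k) (if s = q then (1:H) else 0) := by rw [hR1 s q]
      _ = if s = q then (1:H) else 0 := by split_ifs <;> simp [my_antipode_one]
  rw [Finset.sum_congr rfl (fun s _ => fin s)]
  simp only [ite_smul, zero_smul, Finset.sum_ite_eq', Finset.mem_univ, if_true, one_smul]
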